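/- For all 1 < α ≤ 2 and 0 < β < α−1, the integral ∫_ℝ ∫_ℝ ∫_0^∞ ( 1_{(0,1)}(v) · ∫_0^1 ∫_ℝ h₃(t−u, w, z) dw dt )^α z^β dz dv du is finite, where 1_{(0,1)} is the indicator function of the interval (0,1). -/

import Mathlib

open MeasureTheory Filter Set
open scoped ENNReal

noncomputable def h3 (t s z : ℝ) : ℝ :=
  if 0 < t then 3 / (2 * Real.sqrt (Real.pi * t)) * Real.exp (-3 * z * t - s ^ 2 / (4 * t))
  else 0

lemma integral_h3_w (τ z : ℝ) :
    (∫ w : ℝ, h3 τ w z) = if 0 < τ then 3 * Real.exp (-(3 * z * τ)) else 0 := by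
  by_cases hτ : 0 < τ
  · have hπτ : 0 < Real.pi * τ := mul_pos Real.pi_pos hτ
    have hs : (0:ℝ) < Real.sqrt (Real.pi * τ) := Real.sqrt_pos.mpr hπτ
    rw [if_pos hτ]
    have key : ∀ w : ℝ, h3 τ w z
        = (3 / (2 * Real.sqrt (Real.pi * τ)) * Real.exp (-(3 * z * τ))) *
          Real.exp (-(4 * τ)⁻¹ * w ^ 2) := by
      intro w
      rw [h3, if_pos hτ,
        show -3 * z * τ - w ^ 2 / (4 * τ) = -(3 * z * τ) + -(4 * τ)⁻¹ * w ^ 2 by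
          field_simp; ring,
        Real.exp_add]
      ring
    simp_rw [key]
    rw [integral_const_mul, integral_gaussian]
    rw [show Real.pi / (4 * τ)⁻¹ = 2 ^ 2 * (Real.pi * τ) by field_simp; ring]
    rw [show Real.sqrt (2 ^ 2 * (Real.pi * τ)) = 2 * Real.sqrt (Real.pi * τ) by
      rw [Real.sqrt_mul (by norm_num), Real.sqrt_sq (by norm_num)]]
    field_simp
  · rw [if_neg hτ]
    simp [h3, if_neg hτ]

lemma exp_integrableOn_Ioi (a : ℝ) {c : ℝ} (hc : 0 < c) :
    IntegrableOn (fun t => Real.exp (-(c * t))) (Set.Ioi a) := by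
  simpa [neg_mul] using exp_neg_integrableOn_Ioi a hc

lemma exp_integral_Ioi (a : ℝ) {c : ℝ} (hc : 0 < c) :
    ∫ t in Set.Ioi a, Real.exp (-(c * t)) = Real.exp (-(c * a)) / c := by
  have h := integral_comp_mul_left_Ioi (fun x => Real.exp (-x)) a hc
  simp only [smul_eq_mul] at h
  rw [h, integral_exp_neg_Ioi, div_eq_inv_mul]

lemma exp_integrableOn_Iic {c : ℝ} (hc : 0 < c) :
    IntegrableOn (fun u => Real.exp (c * u)) (Set.Iic (0:ℝ)) := by
  have h0 : IntegrableOn (fun t => Real.exp (-(c * t))) (Set.Ici (0:ℝ)) :=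
    (integrableOn_Ici_iff_integrableOn_Ioi).2 (exp_integrableOn_Ioi 0 hc)
  have h : Integrable ((Set.Ici (0:ℝ)).indicator (fun t => Real.exp (-(c * t)))) :=
    (integrable_indicator_iff measurableSet_Ici).2 h0
  have h2 := h.comp_neg
  have heq : (fun u => ((Set.Ici (0:ℝ)).indicator (fun t => Real.exp (-(c * t)))) (-u))
      = (Set.Iic (0:ℝ)).indicator (fun u => Real.exp (c * u)) := by
    funext u
    by_cases hu : u ≤ 0
    · rw [Set.indicator_of_mem (by simpa using hu : -u ∈ Set.Ici (0:ℝ)),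
        Set.indicator_of_mem (by simpa using hu)]
      ring_nf
    · rw [Set.indicator_of_notMem (by simpa using hu),
        Set.indicator_of_notMem (by simpa using hu)]
  rw [heq] at h2
  exact (integrable_indicator_iff measurableSet_Iic).1 h2

lemma exp_integral_Iic {c : ℝ} (hc : 0 < c) :
    ∫ u in Set.Iic (0:ℝ), Real.exp (c * u) = 1 / c := by
  have h := integral_comp_neg_Ioi (c := (0:ℝ)) (f := fun u => Real.exp (c * u))
  rw [neg_zero] at h
  rw [← h]
  simp_rw [mul_neg]
  rw [exp_integral_Ioi 0 hc, mul_zero, neg_zero, Real.exp_zero]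

noncomputable def Gfun (u z : ℝ) : ℝ :=
  ∫ t in Set.Ioc (0:ℝ) 1, (if 0 < t - u then 3 * Real.exp (-(3 * z * (t - u))) else 0)

lemma Gfun_eq (u z : ℝ) :
    (∫ t in Set.Ioc (0:ℝ) 1, ∫ w : ℝ, h3 (t - u) w z) = Gfun u z := by
  rw [Gfun]
  congr 1
  funext t
  rw [integral_h3_w]

lemma Gfun_nonneg (u z : ℝ) : 0 ≤ Gfun u z := by
  apply integral_nonneg
  intro t
  dsimp only
  split <;> positivity

lemma Gfun_eq_zero {u : ℝ} (hu : 1 ≤ u) (z : ℝ) : Gfun u z = 0 := by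
  rw [Gfun]
  rw [setIntegral_congr_fun measurableSet_Ioc (g := fun _ => (0:ℝ))
    (fun t ht => by rw [if_neg (by push_neg; linarith [ht.2])]), integral_zero]

-- on Ioc 0 1 the integrand equals this indicator function
lemma g_eq_indicator (u z : ℝ) : ∀ t ∈ Set.Ioc (0:ℝ) 1,
    (if 0 < t - u then 3 * Real.exp (-(3 * z * (t - u))) else 0)
      = Set.indicator (Set.Ioi (max u 0)) (fun t => 3 * Real.exp (-(3 * z * (t - u)))) t := by
  intro t ht
  by_cases h : 0 < t - u
  · rw [if_pos h, Set.indicator_of_mem]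
    exact max_lt (by linarith [sub_pos.mp h]) ht.1
  · rw [if_neg h, Set.indicator_of_notMem]
    intro hmem
    exact h (sub_pos.mpr ((le_max_left u 0).trans_lt hmem))

lemma indicator_integrable (u : ℝ) {z : ℝ} (hz : 0 < z) :
    Integrable ((Set.Ioi (max u 0)).indicator (fun t => 3 * Real.exp (-(3 * z * (t - u))))) := by
  rw [integrable_indicator_iff measurableSet_Ioi]
  have h3z : (0:ℝ) < 3 * z := by linarith
  have : ∀ t : ℝ, 3 * Real.exp (-(3 * z * (t - u)))
      = (3 * Real.exp (3 * z * u)) * Real.exp (-(3 * z * t)) := by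
    intro t
    have hsplit : Real.exp (-(3 * z * (t - u)))
        = Real.exp (3 * z * u) * Real.exp (-(3 * z * t)) := by
      rw [← Real.exp_add]; congr 1; ring
    rw [hsplit, ← mul_assoc]
  simp_rw [this]
  exact (exp_integrableOn_Ioi _ h3z).const_mul _

lemma indicator_integral (u : ℝ) {z : ℝ} (hz : 0 < z) :
    ∫ t, ((Set.Ioi (max u 0)).indicator (fun t => 3 * Real.exp (-(3 * z * (t - u))))) t
      = z⁻¹ * Real.exp (3 * z * min u 0) := by
  have h3z : (0:ℝ) < 3 * z := by linarith
  rw [integral_indicator measurableSet_Ioi]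
  have : ∀ t : ℝ, 3 * Real.exp (-(3 * z * (t - u)))
      = (3 * Real.exp (3 * z * u)) * Real.exp (-(3 * z * t)) := by
    intro t
    have hsplit : Real.exp (-(3 * z * (t - u)))
        = Real.exp (3 * z * u) * Real.exp (-(3 * z * t)) := by
      rw [← Real.exp_add]; congr 1; ring
    rw [hsplit, ← mul_assoc]
  simp_rw [this]
  rw [integral_const_mul, exp_integral_Ioi _ h3z]
  rcases le_total u 0 with h | h
  · rw [max_eq_right h, min_eq_left h, mul_zero, neg_zero, Real.exp_zero]
    field_simp
  · rw [max_eq_left h, min_eq_right h, mul_zero, Real.exp_zero, mul_one]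
    have hexp : Real.exp (3 * z * u) * Real.exp (-(3 * z * u)) = 1 := by
      rw [← Real.exp_add]; simp
    calc 3 * Real.exp (3 * z * u) * (Real.exp (-(3 * z * u)) / (3 * z))
        = Real.exp (3 * z * u) * Real.exp (-(3 * z * u)) * (3 / (3 * z)) := by ring
      _ = z⁻¹ := by rw [hexp, one_mul]; field_simp

lemma Gfun_le_3 (u : ℝ) {z : ℝ} (hz : 0 < z) :
    Gfun u z ≤ 3 * Real.exp (3 * z * min u 0) := by
  rw [Gfun, setIntegral_congr_fun measurableSet_Ioc (g_eq_indicator u z)]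
  calc ∫ t in Set.Ioc (0:ℝ) 1,
        ((Set.Ioi (max u 0)).indicator (fun t => 3 * Real.exp (-(3 * z * (t - u))))) t
      ≤ ∫ _ in Set.Ioc (0:ℝ) 1, 3 * Real.exp (3 * z * min u 0) := by
        apply setIntegral_mono_on (indicator_integrable u hz).integrableOn
          (integrableOn_const (by simp [Real.volume_Ioc]))
          measurableSet_Ioc
        intro t ht
        by_cases hmem : t ∈ Set.Ioi (max u 0)
        · rw [Set.indicator_of_mem hmem]
          have hmem' : max u 0 < t := hmem
          have h2 : -(min u 0) ≤ t - u := by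
            rcases le_total u 0 with h | h
            · rw [min_eq_left h]
              have h0 : (0:ℝ) ≤ max u 0 := le_max_right u 0
              linarith
            · rw [min_eq_right h]
              have h0 : u ≤ max u 0 := le_max_left u 0
              linarith
          have hle : -(3 * z * (t - u)) ≤ 3 * z * min u 0 := by
            nlinarith [mul_nonneg (show (0:ℝ) ≤ 3 * z by linarith)
              (show (0:ℝ) ≤ t - u + min u 0 by linarith)]
          exact mul_le_mul_of_nonneg_left (Real.exp_le_exp.mpr hle) (by norm_num)
        · rw [Set.indicator_of_notMem hmem]; positivity
    _ = 3 * Real.exp (3 * z * min u 0) := by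
        rw [setIntegral_const, Real.volume_real_Ioc]
        norm_num

lemma Gfun_le_inv (u : ℝ) {z : ℝ} (hz : 0 < z) :
    Gfun u z ≤ z⁻¹ * Real.exp (3 * z * min u 0) := by
  rw [Gfun, setIntegral_congr_fun measurableSet_Ioc (g_eq_indicator u z)]
  rw [← indicator_integral u hz]
  apply setIntegral_le_integral (indicator_integrable u hz)
  filter_upwards with t
  apply Set.indicator_nonneg
  intro t' _
  positivity

lemma Gfun_le_B {u z : ℝ} (hz : 0 < z) :
    Gfun u z ≤ (if u < 1 then 1 else 0) * (min 3 z⁻¹ * Real.exp (3 * z * min u 0)) := by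
  by_cases hu : u < 1
  · rw [if_pos hu, one_mul]
    rcases le_total (3:ℝ) z⁻¹ with h | h
    · rw [min_eq_left h]; exact Gfun_le_3 u hz
    · rw [min_eq_right h]; exact Gfun_le_inv u hz
  · rw [if_neg hu, zero_mul]
    exact le_of_eq (Gfun_eq_zero (not_lt.1 hu) z)


/-- Proposition 5.1 (i), case `γ > 1/2`: for `1 < α ≤ 2` and `0 < β < α - 1`,
`∫_ℝ ∫_ℝ ∫_0^∞ (1_{(0,1)}(v) ∫_0^1 ∫_ℝ h₃(t-u, w, z) dw dt)^α z^β dz dv du < ∞`. -/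
theorem h3_kernel_integrable_marginal (α β : ℝ) (hα1 : 1 < α) (hα2 : α ≤ 2)
    (hβ0 : 0 < β) (hβ : β < α - 1) :
    ∫⁻ u : ℝ, ∫⁻ v : ℝ, ∫⁻ z in Set.Ioi (0 : ℝ),
      ENNReal.ofReal
        (((Set.Ioo (0 : ℝ) 1).indicator
            (fun _ => ∫ t in Set.Ioc (0 : ℝ) 1, ∫ w : ℝ, h3 (t - u) w z) v) ^ α *
          z ^ β) < ⊤ := by
  simp_rw [Gfun_eq]
  have hα0 : (0:ℝ) < α := by linarith
  set I : ℝ → ℝ≥0∞ := fun u => ∫⁻ z in Set.Ioi (0:ℝ),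
      ENNReal.ofReal (((if u < 1 then (1:ℝ) else 0) *
        (min 3 z⁻¹ * Real.exp (3 * z * min u 0))) ^ α * z ^ β) with hI
  have stepA : ∀ u v : ℝ, (∫⁻ z in Set.Ioi (0:ℝ), ENNReal.ofReal
        (((Set.Ioo (0 : ℝ) 1).indicator (fun _ => Gfun u z) v) ^ α * z ^ β))
      ≤ (Set.Ioo (0:ℝ) 1).indicator (fun _ => I u) v := by
    intro u v
    by_cases hv : v ∈ Set.Ioo (0:ℝ) 1
    · rw [Set.indicator_of_mem hv]
      refine setLIntegral_mono' measurableSet_Ioi fun z hz => ?_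
      rw [Set.indicator_of_mem hv]
      apply ENNReal.ofReal_le_ofReal
      exact mul_le_mul_of_nonneg_right
        (Real.rpow_le_rpow (Gfun_nonneg u z) (Gfun_le_B hz) hα0.le)
        (Real.rpow_nonneg (le_of_lt hz) β)
    · rw [Set.indicator_of_notMem hv]
      have hz0 : ∀ z : ℝ, ENNReal.ofReal
          (((Set.Ioo (0 : ℝ) 1).indicator (fun _ => Gfun u z) v) ^ α * z ^ β) = 0 := by
        intro z
        rw [Set.indicator_of_notMem hv, Real.zero_rpow hα0.ne', zero_mul,
          ENNReal.ofReal_zero]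
      simp_rw [hz0]
      simp
  have hBm : Measurable fun p : ℝ × ℝ =>
      (if p.1 < 1 then (1:ℝ) else 0) * (min 3 p.2⁻¹ * Real.exp (3 * p.2 * min p.1 0)) := by
    apply Measurable.mul
    · exact Measurable.ite (measurableSet_lt measurable_fst measurable_const)
        measurable_const measurable_const
    · exact (measurable_const.min measurable_snd.inv).mul
        (((measurable_const.mul measurable_snd).mul (measurable_fst.min measurable_const)).exp)
  have hswap : (∫⁻ u, I u) = ∫⁻ z in Set.Ioi (0:ℝ), ∫⁻ u,
      ENNReal.ofReal (((if u < 1 then (1:ℝ) else 0) *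
        (min 3 z⁻¹ * Real.exp (3 * z * min u 0))) ^ α * z ^ β) := by
    exact lintegral_lintegral_swap (by fun_prop : Measurable fun p : ℝ × ℝ =>
      ENNReal.ofReal (((if p.1 < 1 then (1:ℝ) else 0) *
        (min 3 p.2⁻¹ * Real.exp (3 * p.2 * min p.1 0))) ^ α * p.2 ^ β)).aemeasurable
  -- inner bound
  set ψ : ℝ → ℝ := fun z => (min 3 z⁻¹) ^ α * z ^ β * ((3 * z * α)⁻¹ + 1) with hψ
  have inner_le : ∀ z ∈ Set.Ioi (0:ℝ), (∫⁻ u : ℝ,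
      ENNReal.ofReal (((if u < 1 then (1:ℝ) else 0) *
        (min 3 z⁻¹ * Real.exp (3 * z * min u 0))) ^ α * z ^ β)) ≤ ENNReal.ofReal (ψ z) := by
    intro z hz
    rw [Set.mem_Ioi] at hz
    have hm0 : (0:ℝ) ≤ min 3 z⁻¹ := le_min (by norm_num) (by positivity)
    have hC0 : 0 ≤ (min 3 z⁻¹) ^ α * z ^ β :=
      mul_nonneg (Real.rpow_nonneg hm0 α) (Real.rpow_nonneg hz.le β)
    have hc' : (0:ℝ) < 3 * z * α := by positivity
    have key : ∀ u : ℝ, ENNReal.ofReal (((if u < 1 then (1:ℝ) else 0) *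
          (min 3 z⁻¹ * Real.exp (3 * z * min u 0))) ^ α * z ^ β)
        = (Set.Iio (1:ℝ)).indicator
            (fun u => ENNReal.ofReal (Real.exp (3 * z * α * min u 0))) u
          * ENNReal.ofReal ((min 3 z⁻¹) ^ α * z ^ β) := by
      intro u
      by_cases hu : u < 1
      · rw [if_pos hu, one_mul, Set.indicator_of_mem (Set.mem_Iio.mpr hu),
          ← ENNReal.ofReal_mul (Real.exp_nonneg _)]
        congr 1
        rw [Real.mul_rpow hm0 (Real.exp_nonneg _), ← Real.exp_mul,
          show 3 * z * min u 0 * α = 3 * z * α * min u 0 by ring]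
        ring
      · rw [if_neg hu, zero_mul, Real.zero_rpow hα0.ne', zero_mul, ENNReal.ofReal_zero,
          Set.indicator_of_notMem (by simpa using hu), zero_mul]
    simp_rw [key]
    rw [lintegral_mul_const' _ _ ENNReal.ofReal_ne_top,
      lintegral_indicator measurableSet_Iio]
    have hsplit : Set.Iio (1:ℝ) = Set.Iic 0 ∪ Set.Ioo 0 1 := by
      ext x
      simp only [Set.mem_Iio, Set.mem_union, Set.mem_Iic, Set.mem_Ioo]
      constructor
      · intro h
        rcases le_or_gt x 0 with h0 | h0
        · exact Or.inl h0
        · exact Or.inr ⟨h0, h⟩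
      · rintro (h | ⟨h1, h2⟩) <;> linarith
    have hdisj : Disjoint (Set.Iic (0:ℝ)) (Set.Ioo 0 1) := by
      rw [Set.disjoint_left]
      intro x hx hx2
      exact absurd hx2.1 (not_lt.2 hx)
    rw [hsplit, lintegral_union measurableSet_Ioo hdisj]
    have hpart1 : (∫⁻ u in Set.Iic (0:ℝ),
        ENNReal.ofReal (Real.exp (3 * z * α * min u 0)))
        = ENNReal.ofReal (1 / (3 * z * α)) := by
      rw [setLIntegral_congr_fun measurableSet_Iic
        (fun u (hu : u ∈ Set.Iic (0:ℝ)) => by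
          rw [min_eq_left (Set.mem_Iic.mp hu)]),
        ← ofReal_integral_eq_lintegral_ofReal (exp_integrableOn_Iic hc')
          (ae_of_all _ fun u => Real.exp_nonneg _),
        exp_integral_Iic hc']
    have hpart2 : (∫⁻ u in Set.Ioo (0:ℝ) 1,
        ENNReal.ofReal (Real.exp (3 * z * α * min u 0))) = 1 := by
      rw [setLIntegral_congr_fun measurableSet_Ioo
        (fun u (hu : u ∈ Set.Ioo (0:ℝ) 1) => by
          rw [min_eq_right (le_of_lt hu.1), mul_zero, Real.exp_zero, ENNReal.ofReal_one]),
        setLIntegral_const, one_mul, Real.volume_Ioo]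
      norm_num
    rw [hpart1, hpart2, hψ]
    rw [← ENNReal.ofReal_one, ← ENNReal.ofReal_add (by positivity) (by norm_num),
      ← ENNReal.ofReal_mul (by positivity)]
    apply ENNReal.ofReal_le_ofReal
    rw [one_div]
    apply le_of_eq
    ring
  calc ∫⁻ u : ℝ, ∫⁻ v : ℝ, ∫⁻ z in Set.Ioi (0 : ℝ),
      ENNReal.ofReal
        (((Set.Ioo (0 : ℝ) 1).indicator (fun _ => Gfun u z) v) ^ α * z ^ β)
      ≤ ∫⁻ u : ℝ, ∫⁻ v : ℝ, (Set.Ioo (0:ℝ) 1).indicator (fun _ => I u) v :=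
        lintegral_mono fun u => lintegral_mono fun v => stepA u v
    _ = ∫⁻ u, I u := by
        refine lintegral_congr fun u => ?_
        rw [lintegral_indicator measurableSet_Ioo, setLIntegral_const, Real.volume_Ioo]
        norm_num
    _ ≤ ∫⁻ z in Set.Ioi (0:ℝ), ENNReal.ofReal (ψ z) := by
        rw [hswap]
        exact setLIntegral_mono' measurableSet_Ioi inner_le
    _ < ⊤ := by
        rw [← Set.Ioc_union_Ioi_eq_Ioi (zero_le_one (α := ℝ))]
        refine lt_of_le_of_lt (lintegral_union_le _ _ _) ?_
        rw [ENNReal.add_lt_top]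
        constructor
        · have hle1 : ∀ z ∈ Set.Ioc (0:ℝ) 1, ENNReal.ofReal (ψ z)
              ≤ ENNReal.ofReal ((3:ℝ) ^ α * ((3*α)⁻¹ + 1) * z ^ (β - 1)) := by
            intro z hz
            obtain ⟨hz0, hz1⟩ := hz
            have hm0 : (0:ℝ) ≤ min 3 z⁻¹ := le_min (by norm_num) (by positivity)
            simp only [hψ]
            apply ENNReal.ofReal_le_ofReal
            have h1 : (min 3 z⁻¹) ^ α ≤ (3:ℝ) ^ α :=
              Real.rpow_le_rpow hm0 (min_le_left _ _) hα0.le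
            have h1z : (1:ℝ) ≤ z⁻¹ := one_le_inv_iff₀.mpr ⟨hz0, hz1⟩
            have ha : (3 * z * α)⁻¹ + 1 ≤ ((3*α)⁻¹ + 1) * z⁻¹ := by
              rw [show (3 * z * α)⁻¹ = (3*α)⁻¹ * z⁻¹ by
                rw [show 3*z*α = 3*α*z by ring, mul_inv]]
              have hinv : (0:ℝ) ≤ (3*α)⁻¹ := by positivity
              nlinarith
            have h2 : z ^ β * ((3 * z * α)⁻¹ + 1) ≤ ((3*α)⁻¹ + 1) * z ^ (β - 1) := by
              calc z ^ β * ((3 * z * α)⁻¹ + 1) ≤ z ^ β * (((3*α)⁻¹ + 1) * z⁻¹) :=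
                    mul_le_mul_of_nonneg_left ha (Real.rpow_nonneg hz0.le β)
                _ = ((3*α)⁻¹ + 1) * (z ^ β * z⁻¹) := by ring
                _ = ((3*α)⁻¹ + 1) * z ^ (β - 1) := by
                    rw [show z ^ β * z⁻¹ = z ^ (β - 1) by
                      rw [Real.rpow_sub hz0, Real.rpow_one, div_eq_mul_inv]]
            calc (min 3 z⁻¹) ^ α * z ^ β * ((3 * z * α)⁻¹ + 1)
                = (min 3 z⁻¹) ^ α * (z ^ β * ((3 * z * α)⁻¹ + 1)) := by ring
              _ ≤ (3:ℝ) ^ α * (((3*α)⁻¹ + 1) * z ^ (β - 1)) := by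
                  apply mul_le_mul h1 h2 ?_ (Real.rpow_nonneg (by norm_num) α)
                  have : (0:ℝ) ≤ (3 * z * α)⁻¹ + 1 := by positivity
                  exact mul_nonneg (Real.rpow_nonneg hz0.le β) this
              _ = (3:ℝ) ^ α * ((3*α)⁻¹ + 1) * z ^ (β - 1) := by ring
          refine lt_of_le_of_lt (setLIntegral_mono' measurableSet_Ioc hle1) ?_
          have hint : IntegrableOn (fun z : ℝ => (3:ℝ) ^ α * ((3*α)⁻¹ + 1) * z ^ (β - 1))
              (Set.Ioc (0:ℝ) 1) := by
            apply Integrable.const_mul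
            rw [← IntegrableOn, ← intervalIntegrable_iff_integrableOn_Ioc_of_le zero_le_one]
            exact intervalIntegral.intervalIntegrable_rpow' (by linarith)
          exact hint.setLIntegral_lt_top
        · have hle2 : ∀ z ∈ Set.Ioi (1:ℝ), ENNReal.ofReal (ψ z)
              ≤ ENNReal.ofReal (((3*α)⁻¹ + 1) * z ^ (β - α)) := by
            intro z hz
            rw [Set.mem_Ioi] at hz
            have hz0 : (0:ℝ) < z := lt_trans one_pos hz
            have hm0 : (0:ℝ) ≤ min 3 z⁻¹ := le_min (by norm_num) (by positivity)
            simp only [hψ]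
            apply ENNReal.ofReal_le_ofReal
            have h1 : (min 3 z⁻¹) ^ α ≤ z ^ (-α) := by
              rw [Real.rpow_neg hz0.le, ← Real.inv_rpow hz0.le]
              exact Real.rpow_le_rpow hm0 (min_le_right _ _) hα0.le
            have h2 : (3 * z * α)⁻¹ + 1 ≤ (3*α)⁻¹ + 1 := by
              have hi : (3*z*α)⁻¹ ≤ (3*α)⁻¹ := by
                apply inv_anti₀ (by positivity)
                nlinarith
              linarith
            calc (min 3 z⁻¹) ^ α * z ^ β * ((3 * z * α)⁻¹ + 1)
                ≤ z ^ (-α) * z ^ β * ((3*α)⁻¹ + 1) := by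
                  apply mul_le_mul
                    (mul_le_mul_of_nonneg_right h1 (Real.rpow_nonneg hz0.le β)) h2
                    (by positivity)
                  exact mul_nonneg (Real.rpow_nonneg hz0.le _) (Real.rpow_nonneg hz0.le β)
              _ = ((3*α)⁻¹ + 1) * z ^ (β - α) := by
                  rw [show z ^ (-α) * z ^ β = z ^ (β - α) by
                    rw [← Real.rpow_add hz0, show -α + β = β - α by ring]]
                  ring
          refine lt_of_le_of_lt (setLIntegral_mono' measurableSet_Ioi hle2) ?_
          have hint : IntegrableOn (fun z : ℝ => ((3*α)⁻¹ + 1) * z ^ (β - α))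
              (Set.Ioi (1:ℝ)) :=
            (integrableOn_Ioi_rpow_of_lt (by linarith) one_pos).const_mul _
          exact hint.setLIntegral_lt_top
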